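/- Let Z be a real-valued random variable on a probability space such that Z ≥ −b almost surely for some constant b ≥ 0, Z is integrable, and 𝔼[Z] > 0. Then there exists θ ∈ (0,1) such that 𝔼[θ^Z] < 1. -/

import Mathlib

open MeasureTheory Filter Real

private lemma phi_nonneg (x : ℝ) : 0 ≤ Real.exp (-x) - 1 + x := by
  have := Real.add_one_le_exp (-x); linarith

private lemma exp_sub_one_le (y : ℝ) : Real.exp y - 1 ≤ y * Real.exp y := by
  have h := Real.add_one_le_exp (-y)
  have hy : Real.exp (-y) = (Real.exp y)⁻¹ := Real.exp_neg y
  have hp : 0 < Real.exp y := Real.exp_pos y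
  rw [hy] at h
  have h2 : (-y + 1) * Real.exp y ≤ (Real.exp y)⁻¹ * Real.exp y :=
    mul_le_mul_of_nonneg_right h hp.le
  rw [inv_mul_cancel₀ hp.ne'] at h2
  nlinarith

/-- Key supporting lemma for the transience proofs: if `Z ≥ −b` a.s. for some `b ≥ 0`,
`Z` is integrable, and `𝔼[Z] > 0`, then there exists `θ ∈ (0,1)` with `𝔼[θ^Z] < 1`. -/
theorem stmt12 {Ω : Type*} [MeasurableSpace Ω] (μ : Measure Ω) [IsProbabilityMeasure μ]
    (Z : Ω → ℝ) (b : ℝ) (hb : 0 ≤ b) (hZb : ∀ᵐ ω ∂μ, -b ≤ Z ω)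
    (hint : Integrable Z μ) (hpos : 0 < ∫ ω, Z ω ∂μ) :
    ∃ θ : ℝ, θ ∈ Set.Ioo (0 : ℝ) 1 ∧ (∫ ω, θ ^ Z ω ∂μ) < 1 := by
  set m : ℝ := ∫ ω, Z ω ∂μ with hm
  set t : ℕ → ℝ := fun n => 1 / (n + 1) with ht
  have htpos : ∀ n, 0 < t n := fun n => by positivity
  have htle : ∀ n, t n ≤ 1 := fun n => by
    rw [ht]; rw [div_le_one (by positivity)]; push_cast; linarith
  set F : ℕ → Ω → ℝ := fun n ω => (Real.exp (-(t n * Z ω)) - 1 + t n * Z ω) / t n with hF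
  have hZm := hint.aestronglyMeasurable
  have hFm : ∀ n, AEStronglyMeasurable (F n) μ := by
    intro n
    have h1 : AEStronglyMeasurable (fun ω => t n * Z ω) μ := hZm.const_mul _
    have hc : Continuous (fun x : ℝ => (Real.exp (-x) - 1 + x) / t n) := by fun_prop
    exact hc.comp_aestronglyMeasurable h1
  -- the bound
  have hbound : ∀ n, ∀ᵐ ω ∂μ, ‖F n ω‖ ≤ |Z ω| * Real.exp b := by
    intro n
    filter_upwards [hZb] with ω hω
    have h0 : 0 ≤ F n ω := div_nonneg (phi_nonneg _) (htpos n).le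
    rw [Real.norm_eq_abs, abs_of_nonneg h0]
    rw [hF, div_le_iff₀ (htpos n)]
    rcases le_or_gt 0 (Z ω) with hz | hz
    · have h1 : Real.exp (-(t n * Z ω)) ≤ 1 := by
        rw [Real.exp_le_one_iff]
        have := mul_nonneg (htpos n).le hz; linarith
      have h2 : |Z ω| = Z ω := abs_of_nonneg hz
      have h3 : (1:ℝ) ≤ Real.exp b := by
        rw [Real.one_le_exp_iff]; exact hb
      have h4 : Real.exp (-(t n * Z ω)) - 1 + t n * Z ω ≤ t n * Z ω := by linarith
      have h5 : 0 ≤ t n * Z ω * (Real.exp b - 1) :=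
        mul_nonneg (mul_nonneg (htpos n).le hz) (by linarith)
      rw [h2]; nlinarith
    · -- Z ω < 0, with -b ≤ Z ω; let y = -(t n * Z ω) ∈ (0, b]
      set y : ℝ := -(t n * Z ω) with hy
      have hy0 : 0 < y := by
        rw [hy]; nlinarith [htpos n]
      have hyb : y ≤ b := by
        rw [hy]
        have : -Z ω ≤ b := by linarith
        have := htle n
        nlinarith [htpos n]
      have h1 : Real.exp y - 1 ≤ y * Real.exp y := exp_sub_one_le y
      have h2 : Real.exp y ≤ Real.exp b := Real.exp_le_exp.mpr hyb
      have h3 : |Z ω| = -Z ω := abs_of_neg hz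
      -- F n ω * t n = exp y - 1 - y ≤ exp y - 1 ≤ y exp y ≤ y exp b = t|Z| exp b
      have h4 : Real.exp (-(t n * Z ω)) - 1 + t n * Z ω = Real.exp y - 1 - y := by
        rw [hy]; ring_nf
      rw [h4, h3]
      have h5 : y * Real.exp y ≤ y * Real.exp b :=
        mul_le_mul_of_nonneg_left h2 hy0.le
      have h6 : y = t n * (-Z ω) := by rw [hy]; ring
      nlinarith [Real.exp_pos y]
  have hg : Integrable (fun ω => |Z ω| * Real.exp b) μ := hint.abs.mul_const _
  -- pointwise limit
  have htt0 : Tendsto t atTop (nhds 0) := tendsto_one_div_add_atTop_nhds_zero_nat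
  have hlim : ∀ᵐ ω ∂μ, Tendsto (fun n => F n ω) atTop (nhds 0) := by
    refine Eventually.of_forall (fun ω => ?_)
    have hb2 : Tendsto (fun n => t n * (Z ω)^2) atTop (nhds 0) := by
      have h := htt0.mul_const ((Z ω)^2)
      rwa [zero_mul] at h
    refine squeeze_zero' ?_ ?_ hb2
    · exact Eventually.of_forall fun n => div_nonneg (phi_nonneg _) (htpos n).le
    · filter_upwards [eventually_ge_atTop ⌈|Z ω|⌉₊] with n hn
      have hsmall : |-(t n * Z ω)| ≤ 1 := by
        rw [abs_neg, abs_mul, abs_of_pos (htpos n)]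
        rw [ht]
        rw [div_mul_eq_mul_div, div_le_one (by positivity), one_mul]
        calc |Z ω| ≤ ⌈|Z ω|⌉₊ := Nat.le_ceil _
          _ ≤ (n:ℝ) := by exact_mod_cast hn
          _ ≤ n + 1 := by linarith
      have := Real.abs_exp_sub_one_sub_id_le hsmall
      have heq : Real.exp (-(t n * Z ω)) - 1 - (-(t n * Z ω))
          = Real.exp (-(t n * Z ω)) - 1 + t n * Z ω := by ring
      rw [heq] at this
      have h0 : 0 ≤ F n ω := div_nonneg (phi_nonneg _) (htpos n).le
      rw [hF, div_le_iff₀ (htpos n)]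
      have habs : Real.exp (-(t n * Z ω)) - 1 + t n * Z ω ≤ (-(t n * Z ω))^2 :=
        (le_abs_self _).trans this
      calc Real.exp (-(t n * Z ω)) - 1 + t n * Z ω ≤ (-(t n * Z ω))^2 := habs
        _ = t n * (Z ω)^2 * t n := by ring
  -- integrability of exp(-(t n * Z))
  have hexpint : ∀ n, Integrable (fun ω => Real.exp (-(t n * Z ω))) μ := by
    intro n
    refine Integrable.mono' (integrable_const (Real.exp (t n * b))) ?_ ?_
    · exact (Real.continuous_exp.comp continuous_neg).comp_aestronglyMeasurable
        (hZm.const_mul _)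
    · filter_upwards [hZb] with ω hω
      rw [Real.norm_eq_abs, abs_of_pos (Real.exp_pos _), Real.exp_le_exp]
      nlinarith [htpos n]
  have hFint : ∀ n, Integrable (F n) μ := by
    intro n
    have : Integrable (fun ω => Real.exp (-(t n * Z ω)) - 1 + t n * Z ω) μ :=
      ((hexpint n).sub (integrable_const 1)).add (hint.const_mul _)
    exact this.div_const _
  -- dominated convergence
  have hDCT : Tendsto (fun n => ∫ ω, F n ω ∂μ) atTop (nhds (∫ _, (0:ℝ) ∂μ)) :=
    tendsto_integral_of_dominated_convergence _ hFm hg hbound hlim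
  rw [integral_zero] at hDCT
  have hev : ∀ᶠ n in atTop, (∫ ω, F n ω ∂μ) < m :=
    hDCT.eventually_lt_const hpos
  obtain ⟨n, hn⟩ := hev.exists
  refine ⟨Real.exp (-(t n)), ⟨Real.exp_pos _, Real.exp_lt_one_iff.mpr (by linarith [htpos n])⟩, ?_⟩
  have hθeq : ∀ ω, Real.exp (-(t n)) ^ Z ω = Real.exp (-(t n * Z ω)) := by
    intro ω
    rw [Real.rpow_def_of_pos (Real.exp_pos _), Real.log_exp]
    ring_nf
  have hrw : (∫ ω, Real.exp (-(t n)) ^ Z ω ∂μ)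
      = ∫ ω, (t n * F n ω + (1 - t n * Z ω)) ∂μ := by
    refine integral_congr_ae (Eventually.of_forall fun ω => ?_)
    show Real.exp (-(t n)) ^ Z ω = t n * F n ω + (1 - t n * Z ω)
    rw [hθeq ω]
    simp only [hF]
    rw [← mul_div_assoc, mul_div_cancel_left₀ _ (htpos n).ne']; ring
  rw [hrw]
  have hi1 : Integrable (fun ω => t n * F n ω) μ := (hFint n).const_mul _
  have hi3 : Integrable (fun ω => t n * Z ω) μ := hint.const_mul _
  have hi2 : Integrable (fun ω => 1 - t n * Z ω) μ := (integrable_const 1).sub hi3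
  rw [integral_add hi1 hi2, integral_const_mul, integral_sub (integrable_const 1) hi3,
    integral_const_mul, integral_const]
  simp only [probReal_univ, smul_eq_mul, one_mul]
  have := htpos n
  nlinarith
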